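/- The sum over all perfect powers p of 1/(p−1) equals 1 (Euler–Goldbach theorem), where each perfect power is counted once. Equivalently, ∑_{k=2}^∞ (ζ(k) − 1) = 1 rearranged over the set of perfect powers: ∑_{p ∈ P} 1/(p−1) = 1 where P = {n^m : n, m ≥ 2}. -/

import Mathlib

open Finsupp ENNReal

namespace EG

/-- gcd of the exponents in the prime factorization. -/
def g (n : ℕ) : ℕ := n.factorization.support.gcd n.factorization

lemma dvd_g_of_pow {a m n : ℕ} (h : n = a ^ m) : m ∣ g n := by
  subst h
  refine Finset.dvd_gcd fun p hp => ?_
  rw [Nat.factorization_pow]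
  exact Dvd.intro _ rfl

lemma g_pos {n : ℕ} (hn : 2 ≤ n) : 1 ≤ g n := by
  rcases Nat.exists_prime_and_dvd (show n ≠ 1 by omega) with ⟨p, hp, hpd⟩
  have hps : p ∈ n.factorization.support := by
    rw [Nat.support_factorization, Nat.mem_primeFactors]
    exact ⟨hp, hpd, by omega⟩
  by_contra h
  have hg : g n = 0 := by omega
  have := (Finset.gcd_eq_zero_iff.mp hg) p hps
  exact (Finsupp.mem_support_iff.mp hps) this

lemma floorRoot_pow {n m : ℕ} (hn : n ≠ 0) (hm : m ≠ 0) (h : m ∣ g n) :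
    Nat.floorRoot m n ^ m = n := by
  have h1 : Nat.floorRoot m n ≠ 0 := Nat.floorRoot_ne_zero.mpr ⟨hm, hn⟩
  apply Nat.factorization_inj (by simpa using pow_ne_zero m h1) hn
  rw [Nat.factorization_pow, Nat.factorization_floorRoot]
  ext p
  simp only [Finsupp.smul_apply, Finsupp.floorDiv_apply, smul_eq_mul, Nat.floorDiv_eq_div]
  rcases eq_or_ne (n.factorization p) 0 with h0 | h0
  · simp [h0]
  · have hps : p ∈ n.factorization.support := Finsupp.mem_support_iff.mpr h0
    have : m ∣ n.factorization p := h.trans (Finset.gcd_dvd hps)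
    exact Nat.mul_div_cancel' this

lemma g_pow {a e : ℕ} (he : e ≠ 0) : g (a ^ e) = e * g a := by
  rcases eq_or_ne a 0 with rfl | ha
  · simp [g, zero_pow he]
  unfold g
  rw [Nat.factorization_pow, Finsupp.support_smul_eq he]
  have : ∀ p ∈ a.factorization.support, (e • a.factorization) p = e * a.factorization p := by
    intro p _; simp
  rw [Finset.gcd_congr rfl this]
  simpa using Finset.gcd_mul_left (f := a.factorization) (a := e)
    (s := a.factorization.support)

/-- minimal base -/
def root (n : ℕ) : ℕ := Nat.floorRoot (g n) n

lemma root_pow {n : ℕ} (hn : 2 ≤ n) : root n ^ g n = n :=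
  floorRoot_pow (by omega) (by have := g_pos hn; omega) dvd_rfl

lemma root_ge_two {n : ℕ} (hn : 2 ≤ n) : 2 ≤ root n := by
  by_contra h
  have h1 : root n ≤ 1 := by omega
  have := root_pow hn
  have : n ≤ 1 := by
    calc n = root n ^ g n := (root_pow hn).symm
    _ ≤ 1 ^ g n := Nat.pow_le_pow_left h1 _
    _ = 1 := one_pow _
  omega

lemma g_root {n : ℕ} (hn : 2 ≤ n) : g (root n) = 1 := by
  have hg := g_pos hn
  have h1 : g n * g (root n) = g n * 1 := by
    rw [mul_one]
    conv_rhs => rw [← root_pow hn]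
    rw [g_pow (by omega)]
  exact Nat.eq_of_mul_eq_mul_left (by omega) h1

lemma root_pow_eq {a k : ℕ} (hga : g a = 1) (hk : k ≠ 0) :
    root (a ^ k) = a ∧ g (a ^ k) = k := by
  have hg : g (a ^ k) = k := by rw [g_pow hk, hga, mul_one]
  exact ⟨by rw [root, hg, Nat.floorRoot_pow_self hk], hg⟩

lemma mem_P_iff {p : ℕ} : (∃ n m : ℕ, 2 ≤ n ∧ 2 ≤ m ∧ p = n ^ m) ↔ 2 ≤ p ∧ 2 ≤ g p := by
  constructor
  · rintro ⟨n, m, hn, hm, rfl⟩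
    have hp : 2 ≤ n ^ m := by
      calc 2 ≤ n := hn
      _ = n ^ 1 := (pow_one n).symm
      _ ≤ n ^ m := Nat.pow_le_pow_right (by omega) (by omega)
    refine ⟨hp, ?_⟩
    have := dvd_g_of_pow (a := n) (m := m) rfl
    have := g_pos hp
    exact le_trans hm (Nat.le_of_dvd (by omega) ‹m ∣ g (n ^ m)›)
  · rintro ⟨hp, hg⟩
    exact ⟨root p, g p, root_ge_two hp, hg, (root_pow hp).symm⟩


abbrev P := {p : ℕ // ∃ n m : ℕ, 2 ≤ n ∧ 2 ≤ m ∧ p = n ^ m}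

lemma two_le_pow {a k : ℕ} (ha : 2 ≤ a) (hk : 1 ≤ k) : 2 ≤ a ^ k :=
  calc 2 = 2 ^ 1 := rfl
  _ ≤ a ^ 1 := Nat.pow_le_pow_left ha 1
  _ ≤ a ^ k := Nat.pow_le_pow_right (by omega) hk

noncomputable def E : {n : ℕ // 2 ≤ n} × {m : ℕ // 2 ≤ m} ≃ P × {k : ℕ // 1 ≤ k} where
  toFun x := (⟨root x.1.1 ^ x.2.1, root x.1.1, x.2.1, root_ge_two x.1.2, x.2.2, rfl⟩,
              ⟨g x.1.1, g_pos x.1.2⟩)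
  invFun y := (⟨root y.1.1 ^ y.2.1, two_le_pow (root_ge_two (mem_P_iff.mp y.1.2).1) y.2.2⟩,
               ⟨g y.1.1, (mem_P_iff.mp y.1.2).2⟩)
  left_inv := by
    rintro ⟨⟨n, hn⟩, ⟨m, hm⟩⟩
    obtain ⟨hr, hg⟩ := root_pow_eq (g_root hn) (show m ≠ 0 by omega)
    simp only [Prod.mk.injEq, Subtype.mk.injEq]
    refine ⟨?_, hg⟩
    rw [hr]; exact root_pow hn
  right_inv := by
    rintro ⟨⟨p, hp⟩, ⟨k, hk⟩⟩
    obtain ⟨hp2, hgp⟩ := mem_P_iff.mp hp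
    obtain ⟨hr, hg⟩ := root_pow_eq (g_root hp2) (show k ≠ 0 by omega)
    simp only [Prod.mk.injEq, Subtype.mk.injEq]
    refine ⟨?_, hg⟩
    rw [hr]; exact root_pow hp2

lemma E_val (x : {n : ℕ // 2 ≤ n} × {m : ℕ // 2 ≤ m}) :
    ((E x).1 : ℕ) ^ ((E x).2 : ℕ) = (x.1 : ℕ) ^ (x.2 : ℕ) := by
  rcases x with ⟨⟨n, hn⟩, ⟨m, hm⟩⟩
  show (root n ^ m) ^ g n = n ^ m
  rw [← pow_mul, mul_comm, pow_mul, root_pow hn]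


lemma two_le_P (p : P) : 2 ≤ (p : ℕ) := by
  obtain ⟨n, m, hn, hm, h⟩ := p.2
  have : 2 ≤ n ^ m := le_trans hn (Nat.le_self_pow (by omega) n)
  simpa [h] using this

lemma geo1 {p : ℕ} (hp : 2 ≤ p) :
    ∑' k : ℕ, ((p : ℝ≥0∞)⁻¹) ^ (k + 1) = ((p : ℝ≥0∞) - 1)⁻¹ := by
  have hp0 : (p : ℝ≥0∞) ≠ 0 := by exact_mod_cast (by omega : p ≠ 0)
  have hpt : (p : ℝ≥0∞) ≠ ⊤ := natCast_ne_top p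
  rw [ENNReal.tsum_geometric_add_one, ← ENNReal.mul_inv (Or.inl hp0) (Or.inl hpt)]
  congr 1
  rw [ENNReal.mul_sub (fun _ _ => hpt), mul_one, ENNReal.mul_inv_cancel hp0 hpt]

lemma geo2 {p : ℕ} (hp : 2 ≤ p) :
    ∑' k : ℕ, ((p : ℝ≥0∞)⁻¹) ^ (k + 2) = ((p : ℝ≥0∞) - 1)⁻¹ * (p : ℝ≥0∞)⁻¹ := by
  have : ∀ k : ℕ, ((p : ℝ≥0∞)⁻¹) ^ (k + 2) = ((p : ℝ≥0∞)⁻¹) ^ (k + 1) * (p : ℝ≥0∞)⁻¹ := by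
    intro k; rw [pow_succ]
  rw [tsum_congr this, ENNReal.tsum_mul_right, geo1 hp]

def e1 : ℕ ≃ {k : ℕ // 1 ≤ k} where
  toFun k := ⟨k + 1, by omega⟩
  invFun k := k.1 - 1
  left_inv k := by simp
  right_inv k := by have := k.2; exact Subtype.ext (by simp; omega)

def e2 : ℕ ≃ {m : ℕ // 2 ≤ m} where
  toFun m := ⟨m + 2, by omega⟩
  invFun m := m.1 - 2
  left_inv m := by simp
  right_inv m := by have := m.2; exact Subtype.ext (by simp; omega)

lemma telescope_real : HasSum (fun j : ℕ => ((j : ℝ) + 1)⁻¹ - ((j : ℝ) + 2)⁻¹) 1 := by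
  have hnn : ∀ j : ℕ, 0 ≤ ((j : ℝ) + 1)⁻¹ - ((j : ℝ) + 2)⁻¹ := by
    intro j
    have h1 : (0:ℝ) < (j : ℝ) + 1 := by positivity
    have h2 : ((j : ℝ) + 1) ≤ (j : ℝ) + 2 := by linarith
    have := inv_anti₀ h1 h2
    linarith
  rw [hasSum_iff_tendsto_nat_of_nonneg hnn]
  have hps : ∀ n : ℕ, ∑ j ∈ Finset.range n, (((j : ℝ) + 1)⁻¹ - ((j : ℝ) + 2)⁻¹)
      = 1 - ((n : ℝ) + 1)⁻¹ := by
    intro n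
    induction n with
    | zero => simp
    | succ n ih =>
        rw [Finset.sum_range_succ, ih]
        push_cast
        have h1 : ((n : ℝ) + 1) ≠ 0 := by positivity
        have h2 : ((n : ℝ) + 2) ≠ 0 := by positivity
        field_simp
        ring
  simp only [hps]
  have : Filter.Tendsto (fun n : ℕ => ((n : ℝ) + 1)⁻¹) Filter.atTop (nhds 0) := by
    simpa [one_div] using (tendsto_one_div_add_atTop_nhds_zero_nat : Filter.Tendsto (fun n : ℕ => 1 / ((n : ℝ) + 1)) Filter.atTop (nhds 0))
  simpa using Filter.Tendsto.const_sub 1 this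

lemma telescope : ∑' j : ℕ, (((j + 1 : ℕ) : ℝ≥0∞))⁻¹ * (((j + 2 : ℕ) : ℝ≥0∞))⁻¹ = 1 := by
  have hnn : ∀ j : ℕ, 0 ≤ ((j : ℝ) + 1)⁻¹ - ((j : ℝ) + 2)⁻¹ := by
    intro j
    have h1 : (0:ℝ) < (j : ℝ) + 1 := by positivity
    have h2 : ((j : ℝ) + 1) ≤ (j : ℝ) + 2 := by linarith
    have := inv_anti₀ h1 h2
    linarith
  have hsum := telescope_real.summable
  have h := ENNReal.ofReal_tsum_of_nonneg hnn hsum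
  rw [telescope_real.tsum_eq, ENNReal.ofReal_one] at h
  rw [h]
  apply tsum_congr
  intro j
  have h1 : (0:ℝ) < (j : ℝ) + 1 := by positivity
  have h2 : (0:ℝ) < (j : ℝ) + 2 := by positivity
  have heq : ((j : ℝ) + 1)⁻¹ - ((j : ℝ) + 2)⁻¹ = (((j:ℝ) + 1) * ((j:ℝ) + 2))⁻¹ := by
    field_simp
    ring
  rw [heq, mul_inv, ENNReal.ofReal_mul (by positivity), ENNReal.ofReal_inv_of_pos h1,
    ENNReal.ofReal_inv_of_pos h2,
    show ((j:ℝ)+1) = ((j+1:ℕ):ℝ) by push_cast; ring,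
    show ((j:ℝ)+2) = ((j+2:ℕ):ℝ) by push_cast; ring,
    ENNReal.ofReal_natCast, ENNReal.ofReal_natCast]

theorem key : ∑' p : P, ((p : ℝ≥0∞) - 1)⁻¹ = 1 := by
  calc ∑' p : P, (((p : ℕ) : ℝ≥0∞) - 1)⁻¹
      = ∑' (p : P) (k : {k : ℕ // 1 ≤ k}), (((p : ℕ) : ℝ≥0∞)⁻¹) ^ (k : ℕ) := by
        apply tsum_congr
        intro p
        rw [← e1.tsum_eq]
        exact (geo1 (two_le_P p)).symm
    _ = ∑' z : P × {k : ℕ // 1 ≤ k}, (((z.1 : ℕ) : ℝ≥0∞)⁻¹) ^ (z.2 : ℕ) :=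
        (ENNReal.tsum_prod (f := fun (p : P) (k : {k : ℕ // 1 ≤ k}) => (((p : ℕ) : ℝ≥0∞))⁻¹ ^ (k : ℕ))).symm
    _ = ∑' x : {n : ℕ // 2 ≤ n} × {m : ℕ // 2 ≤ m},
          ((((E x).1 : ℕ) : ℝ≥0∞)⁻¹) ^ ((E x).2 : ℕ) := (E.tsum_eq _).symm
    _ = ∑' x : {n : ℕ // 2 ≤ n} × {m : ℕ // 2 ≤ m},
          (((x.1 : ℕ) : ℝ≥0∞)⁻¹) ^ (x.2 : ℕ) := by
        apply tsum_congr
        intro x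
        rw [← ENNReal.inv_pow, ← ENNReal.inv_pow, ← Nat.cast_pow, ← Nat.cast_pow, E_val]
    _ = ∑' (n : {n : ℕ // 2 ≤ n}) (m : {m : ℕ // 2 ≤ m}),
          (((n : ℕ) : ℝ≥0∞)⁻¹) ^ (m : ℕ) :=
        ENNReal.tsum_prod (f := fun (n : {n : ℕ // 2 ≤ n}) (m : {m : ℕ // 2 ≤ m}) => (((n : ℕ) : ℝ≥0∞))⁻¹ ^ (m : ℕ))
    _ = ∑' n : {n : ℕ // 2 ≤ n}, (((n : ℕ) : ℝ≥0∞) - 1)⁻¹ * ((n : ℕ) : ℝ≥0∞)⁻¹ := by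
        apply tsum_congr
        intro n
        rw [← e2.tsum_eq]
        exact geo2 n.2
    _ = ∑' j : ℕ, (((j + 1 : ℕ) : ℝ≥0∞))⁻¹ * (((j + 2 : ℕ) : ℝ≥0∞))⁻¹ := by
        rw [← e2.tsum_eq]
        apply tsum_congr
        intro j
        show ((((j + 2 : ℕ)) : ℝ≥0∞) - 1)⁻¹ * (((j + 2 : ℕ) : ℝ≥0∞))⁻¹ = _
        congr 2
        rw [show ((1:ℝ≥0∞)) = ((1 : ℕ) : ℝ≥0∞) by norm_num, ← ENNReal.natCast_sub]
        norm_num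
    _ = 1 := telescope

end EG

theorem euler_goldbach :
    ∑' p : {p : ℕ // ∃ n m : ℕ, 2 ≤ n ∧ 2 ≤ m ∧ p = n ^ m},
      (1 : ℝ) / ((p : ℕ) - 1 : ℝ) = 1 := by
  have hne : ∀ p : EG.P, (((p : ℕ) : ℝ≥0∞) - 1)⁻¹ ≠ ⊤ := by
    intro p
    have h2 : 2 ≤ (p : ℕ) := EG.two_le_P p
    rw [Ne, ENNReal.inv_eq_top, tsub_eq_zero_iff_le]
    intro h
    have h3 : ((2 : ℕ) : ℝ≥0∞) ≤ ((p : ℕ) : ℝ≥0∞) := by exact_mod_cast h2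
    have := le_trans h3 h
    norm_num at this
  have := ENNReal.tsum_toReal_eq hne
  rw [EG.key] at this
  simp only [ENNReal.toReal_one] at this
  conv_rhs => rw [this]
  apply tsum_congr
  intro p
  have h2 : 2 ≤ (p : ℕ) := EG.two_le_P p
  have hle : (1 : ℝ≥0∞) ≤ ((p : ℕ) : ℝ≥0∞) := by exact_mod_cast Nat.one_le_cast.mpr (le_trans one_le_two h2)
  rw [ENNReal.toReal_inv, ENNReal.toReal_sub_of_le hle (ENNReal.natCast_ne_top _)]
  simp [one_div]
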